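/- Let k be a field of characteristic p > 0, H a p-soluble finite group, V a kH-module, and a an element of V fixed by some Sylow p-subgroup of H such that the H-orbit of a spans V. If b in V satisfies gcd(|a^H|, |b^H|) = 1, then b is fixed by H. -/

import Mathlib

/-- A finite group is `p`-soluble if it has a subnormal series in which every
quotient is either a `p`-group (every element of the quotient has `p`-power order)
or a `p'`-group (the quotient has order prime to `p`); equivalently, every
composition factor is a `p`-group or a `p'`-group. -/
def IsPSolvable (p : ℕ) (G : Type*) [Group G] : Prop :=
  ∃ (n : ℕ) (c : Fin (n + 1) → Subgroup G),
    c 0 = ⊥ ∧ c (Fin.last n) = ⊤ ∧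
    ∀ i : Fin n, c i.castSucc ≤ c i.succ ∧
      ((c i.castSucc).subgroupOf (c i.succ)).Normal ∧
      ((∀ x ∈ c i.succ, ∃ m : ℕ, x ^ (p ^ m) ∈ c i.castSucc) ∨
        ¬ p ∣ (c i.castSucc).relIndex (c i.succ))

open Subgroup MulAction Finset

universe u v w

section Helpers
variable {G : Type*} [Group G]

lemma normal_subgroupOf_iff' {A B : Subgroup G} (hAB : A ≤ B) :
    (A.subgroupOf B).Normal ↔ ∀ a ∈ A, ∀ b ∈ B, b * a * b⁻¹ ∈ A := by
  constructor
  · intro hn a ha b hb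
    have := hn.conj_mem ⟨a, hAB ha⟩ (by simpa [Subgroup.mem_subgroupOf]) ⟨b, hb⟩
    simpa [Subgroup.mem_subgroupOf] using this
  · intro h
    constructor
    intro x hx g
    simp only [Subgroup.mem_subgroupOf] at hx ⊢
    exact h _ hx _ g.2

lemma chain_mono {n : ℕ} (c : Fin (n+1) → Subgroup G)
    (h : ∀ i : Fin n, c i.castSucc ≤ c i.succ) : Monotone c := by
  have key : ∀ (k m : ℕ) (hm : m < n+1) (hk : m + k < n+1), c ⟨m, hm⟩ ≤ c ⟨m+k, hk⟩ := by
    intro k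
    induction k with
    | zero => intro m hm hk; simp
    | succ k ih =>
      intro m hm hk
      have hk' : m + k < n + 1 := by omega
      refine (ih m hm hk').trans ?_
      have hkn : m + k < n := by omega
      have e1 : (⟨m+k, hkn⟩ : Fin n).castSucc = ⟨m+k, hk'⟩ := rfl
      have e2 : (⟨m+k, hkn⟩ : Fin n).succ = ⟨m+(k+1), hk⟩ := by
        ext; simp [Fin.succ]; omega
      have := h ⟨m+k, hkn⟩
      rwa [e1, e2] at this
  intro i j hij
  obtain ⟨kk, hkk⟩ : ∃ kk, (j : ℕ) = (i : ℕ) + kk := ⟨(j : ℕ) - (i : ℕ), by omega⟩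
  have hj : j = ⟨(i:ℕ) + kk, by omega⟩ := by ext; simpa using hkk
  rw [hj]
  exact key kk i.1 i.2 _

lemma Subgroup.eq_of_le_of_card_le' [Finite G] {A B : Subgroup G} (h : A ≤ B)
    (hc : Nat.card B ≤ Nat.card A) : A = B := by
  have hcard : Nat.card A = Nat.card B := le_antisymm (Subgroup.card_le_of_le h) hc
  have hinj : Function.Injective (Subgroup.inclusion h) := Subgroup.inclusion_injective h
  have hbij : Function.Bijective (Subgroup.inclusion h) :=
    (Nat.bijective_iff_injective_and_card _).mpr ⟨hinj, hcard⟩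
  refine le_antisymm h ?_
  intro b hb
  obtain ⟨⟨x, hx⟩, he⟩ := hbij.surjective ⟨b, hb⟩
  have : x = b := congrArg Subtype.val he
  exact this ▸ hx

lemma relindex_ne_zero_fin [Finite G] (A B : Subgroup G) : A.relIndex B ≠ 0 :=
  Subgroup.index_ne_zero_of_finite

lemma relindex_dvd_index_of_normal_right [Finite G] (A N : Subgroup G) (hN : N.Normal) :
    A.relIndex N ∣ A.index := by
  haveI := hN
  have h1 : (A ⊓ N).relIndex N * N.relIndex (A ⊔ N) = (A ⊓ N).relIndex (A ⊔ N) :=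
    relIndex_mul_relIndex _ _ _ inf_le_right le_sup_right
  have h2 : (A ⊓ N).relIndex A * A.relIndex (A ⊔ N) = (A ⊓ N).relIndex (A ⊔ N) :=
    relIndex_mul_relIndex _ _ _ inf_le_left le_sup_left
  have h3 : N.relIndex (A ⊔ N) = (A ⊓ N).relIndex A := by
    rw [relIndex_sup_right, ← inf_relIndex_right N A, inf_comm]
  have hne : (A ⊓ N).relIndex A ≠ 0 := relindex_ne_zero_fin _ _
  have h4 : (A ⊓ N).relIndex N = A.relIndex (A ⊔ N) := by
    have := h1.trans h2.symm
    rw [h3] at this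
    exact Nat.eq_of_mul_eq_mul_right (Nat.pos_of_ne_zero hne) (this.trans (mul_comm _ _))
  rw [← inf_relIndex_right A N, h4]
  exact relIndex_dvd_index_of_le le_sup_left

lemma card_orbit_eq_index {X : Type*} [MulAction G X] (x : X) :
    Nat.card (orbit G x) = (stabilizer G x).index :=
  (Nat.card_congr (MulAction.orbitEquivQuotientStabilizer G x)).trans
    (Subgroup.index_eq_card _).symm

lemma card_sup_dvd_mul [Finite G] (X Y : Subgroup G) (hY : Y.Normal) :
    Nat.card (X ⊔ Y : Subgroup G) ∣ Nat.card X * Nat.card Y := by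
  haveI := hY
  have lag1 : Nat.card (Y.subgroupOf (X ⊔ Y)) * (Y.subgroupOf (X ⊔ Y)).index
      = Nat.card (X ⊔ Y : Subgroup G) := Subgroup.card_mul_index _
  have hc1 : Nat.card (Y.subgroupOf (X ⊔ Y)) = Nat.card Y :=
    Nat.card_congr (Subgroup.subgroupOfEquivOfLe le_sup_right).toEquiv
  have hidx : (Y.subgroupOf (X ⊔ Y)).index = Y.relIndex X := by
    rw [show (Y.subgroupOf (X ⊔ Y)).index = Y.relIndex (X ⊔ Y) from rfl]
    exact Subgroup.relIndex_sup_right X Y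
  have lag2 : Nat.card (Y.subgroupOf X) * Y.relIndex X = Nat.card X :=
    Subgroup.card_mul_index _
  have hdvd : Y.relIndex X ∣ Nat.card X := Dvd.intro_left _ lag2
  rw [← lag1, hc1, hidx, mul_comm (Nat.card X) (Nat.card Y)]
  exact mul_dvd_mul_left _ hdvd

lemma upgrade_core [Finite G] {M : Subgroup G} (hM : M.Normal)
    (Q : Subgroup ↥M → Prop)
    (hQsup : ∀ X Y : Subgroup ↥M, X.Normal → Y.Normal → Q X → Q Y → Q (X ⊔ Y))
    (hQmap : ∀ (σ : ↥M ≃* ↥M) (X : Subgroup ↥M), Q X → Q (X.map σ.toMonoidHom))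
    (N' : Subgroup ↥M) (h1 : N'.Normal) (h2 : N' ≠ ⊥) (hQN' : Q N') :
    ∃ C : Subgroup ↥M, Q C ∧ C ≠ ⊥ ∧ (C.map M.subtype).Normal := by
  classical
  haveI := hM
  set S : Set (Subgroup ↥M) := {X | X.Normal ∧ Q X} with hS
  obtain ⟨C, hCS, hCmax⟩ : ∃ C ∈ S, ∀ X ∈ S, Nat.card ↥C ≤ Nat.card ↥X → Nat.card ↥C = Nat.card ↥X := by
    obtain ⟨C, hCS, hC⟩ := Set.Finite.exists_maximalFor (fun X : Subgroup ↥M => Nat.card ↥X) S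
      (Set.toFinite S) ⟨N', h1, hQN'⟩
    exact ⟨C, hCS, fun X hX hle => le_antisymm hle (hC hX hle)⟩
  have hCall : ∀ Y ∈ S, Y ≤ C := by
    intro Y hY
    haveI := hCS.1; haveI := hY.1
    have hsup : C ⊔ Y ∈ S := ⟨inferInstance, hQsup _ _ hCS.1 hY.1 hCS.2 hY.2⟩
    have heq : C = C ⊔ Y := Subgroup.eq_of_le_of_card_le' le_sup_left
      (le_of_eq (hCmax _ hsup (Subgroup.card_le_of_le le_sup_left)).symm)
    exact le_sup_right.trans heq.ge
  have hstab : ∀ g : G, ∀ x ∈ C, (MulAut.conjNormal g : MulAut ↥M) x ∈ C := by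
    intro g x hx
    set σ := (MulAut.conjNormal g : MulAut ↥M)
    have hmapS : C.map σ.toMonoidHom ∈ S :=
      ⟨Subgroup.Normal.map hCS.1 σ.toMonoidHom σ.surjective, hQmap σ C hCS.2⟩
    exact hCall _ hmapS ⟨x, hx, rfl⟩
  refine ⟨C, hCS.2, ?_, ?_⟩
  · intro hbot
    exact h2 (le_bot_iff.mp (hbot ▸ hCall N' ⟨h1, hQN'⟩))
  · constructor
    rintro x ⟨c, hc, rfl⟩ g
    refine ⟨(MulAut.conjNormal g : MulAut ↥M) c, hstab g c hc, ?_⟩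
    simp [MulAut.conjNormal_apply]


end Helpers

section Cover
variable {G : Type*} [Group G]

lemma cover_of_coprime_index [Finite G] (X Y : Subgroup G)
    (hcop : Nat.Coprime X.index Y.index) :
    ∀ z : G, ∃ x ∈ X, ∃ y ∈ Y, x * y = z := by
  classical
  have hX0 : X.index ≠ 0 := Subgroup.index_ne_zero_of_finite
  have hY0 : Y.index ≠ 0 := Subgroup.index_ne_zero_of_finite
  have hI0 : (X ⊓ Y).index ≠ 0 := Subgroup.index_ne_zero_of_finite
  have e1 : (X ⊓ Y).index = X.index * Y.index := by
    have d1 : X.index ∣ (X ⊓ Y).index := Subgroup.index_dvd_of_le inf_le_left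
    have d2 : Y.index ∣ (X ⊓ Y).index := Subgroup.index_dvd_of_le inf_le_right
    have dprod : X.index * Y.index ∣ (X ⊓ Y).index :=
      Nat.Coprime.mul_dvd_of_dvd_of_dvd hcop d1 d2
    exact le_antisymm Subgroup.index_inf_le (Nat.le_of_dvd (Nat.pos_of_ne_zero hI0) dprod)
  have e2 : Y.relIndex X = Y.index := by
    have h3 : (X ⊓ Y).relIndex X * X.index = (X ⊓ Y).index :=
      Subgroup.relIndex_mul_index inf_le_left
    rw [e1, mul_comm X.index Y.index] at h3
    have := Nat.eq_of_mul_eq_mul_right (Nat.pos_of_ne_zero hX0) h3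
    rwa [inf_relIndex_left] at this
  -- the map ↥X ⧸ (Y.subgroupOf X) → G ⧸ Y
  let ψ : (↥X ⧸ Y.subgroupOf X) → G ⧸ Y :=
    Quotient.map' Subtype.val (by
      intro u v huv
      rw [QuotientGroup.leftRel_apply] at huv ⊢
      simpa [Subgroup.mem_subgroupOf] using huv)
  have hmk : ∀ x : ↥X, ψ (QuotientGroup.mk x) = QuotientGroup.mk (x : G) := fun x => rfl
  have hinj : Function.Injective ψ := by
    intro q q'
    induction q using Quotient.inductionOn'
    induction q' using Quotient.inductionOn'
    rename_i u v
    intro he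
    have : ((u : G))⁻¹ * v ∈ Y := by
      have := he
      rw [show (Quotient.mk'' u : ↥X ⧸ Y.subgroupOf X) = QuotientGroup.mk u from rfl,
        show (Quotient.mk'' v : ↥X ⧸ Y.subgroupOf X) = QuotientGroup.mk v from rfl,
        hmk, hmk] at this
      exact (QuotientGroup.eq).mp this
    apply Quotient.sound'
    rw [QuotientGroup.leftRel_apply]
    simpa [Subgroup.mem_subgroupOf] using this
  have hcard : Nat.card (↥X ⧸ Y.subgroupOf X) = Nat.card (G ⧸ Y) := by
    rw [← Subgroup.index_eq_card, ← Subgroup.index_eq_card]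
    exact e2
  have hbij : Function.Bijective ψ :=
    (Nat.bijective_iff_injective_and_card ψ).mpr ⟨hinj, hcard⟩
  intro z
  obtain ⟨q, hq⟩ := hbij.surjective (QuotientGroup.mk z)
  induction q using Quotient.inductionOn'
  rename_i x
  rw [show (Quotient.mk'' x : ↥X ⧸ Y.subgroupOf X) = QuotientGroup.mk x from rfl, hmk] at hq
  have hy : ((x : G))⁻¹ * z ∈ Y := (QuotientGroup.eq).mp hq
  exact ⟨x, x.2, _, hy, by group⟩

end Cover

section SumFib
variable {Γ V : Type*} [Group Γ] [Fintype Γ] [AddCommMonoid V] [MulAction Γ V] [DecidableEq V]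

lemma sum_smul_eq_nsmul_sum (x : V) :
    ∃ m : ℕ, 0 < m ∧
      ∑ g : Γ, g • x = m • ∑ y ∈ Finset.image (fun g : Γ => g • x) Finset.univ, y := by
  classical
  set img := Finset.image (fun g : Γ => g • x) Finset.univ with himg
  set m := (Finset.univ.filter fun g : Γ => g • x = x).card with hm
  have hmpos : 0 < m := by
    refine Finset.card_pos.mpr ⟨1, ?_⟩
    simp [one_smul]
  refine ⟨m, hmpos, ?_⟩
  have hfib := Finset.sum_fiberwise_of_maps_to
    (s := Finset.univ) (g := fun g : Γ => g • x) (t := img)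
    (fun i _ => Finset.mem_image_of_mem _ (Finset.mem_univ i)) (fun g => g • x)
  rw [← hfib]
  have hcardfib : ∀ y ∈ img, (Finset.univ.filter fun g : Γ => g • x = y).card = m := by
    intro y hy
    obtain ⟨g₀, _, hg₀⟩ := Finset.mem_image.mp hy
    rw [hm]
    apply Finset.card_bij' (fun g _ => g₀⁻¹ * g) (fun g _ => g₀ * g)
    · intro g hg
      simp only [Finset.mem_filter, Finset.mem_univ, true_and] at hg ⊢
      rw [mul_smul, hg, ← hg₀, inv_smul_smul]
    · intro g hg
      simp only [Finset.mem_filter, Finset.mem_univ, true_and] at hg ⊢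
      rw [mul_smul, hg, hg₀]
    · intro g _; group
    · intro g _; group
  calc ∑ y ∈ img, ∑ g ∈ Finset.univ.filter fun g : Γ => g • x = y, g • x
      = ∑ y ∈ img, m • y := by
        refine Finset.sum_congr rfl fun y hy => ?_
        rw [← hcardfib y hy]
        rw [Finset.sum_congr rfl (fun g hg => (Finset.mem_filter.mp hg).2), Finset.sum_const]
    _ = m • ∑ y ∈ img, y := (Finset.smul_sum).symm

end SumFib

lemma relindex_map_dvd_relindex {G G' : Type*} [Group G] [Group G'] (f : G →* G')
    (A B : Subgroup G) (hAB : A ≤ B) :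
    (A.map f).relIndex (B.map f) ∣ A.relIndex B := by
  set φ := f.subgroupMap B
  have hφ : Function.Surjective φ := f.subgroupMap_surjective B
  set X := (A.map f).subgroupOf (B.map f)
  have h1 : (X.comap φ).index = X.index := Subgroup.index_comap_of_surjective X hφ
  have hle : A.subgroupOf B ≤ X.comap φ := by
    intro x hx
    rw [Subgroup.mem_subgroupOf] at hx
    simp only [Subgroup.mem_comap, Subgroup.mem_subgroupOf, X]
    exact ⟨(x : G), hx, rfl⟩
  have := Subgroup.index_dvd_of_le hle
  rw [h1] at this
  exact this

lemma isPSolvable_of_surjective {G G' : Type*} [Group G] [Group G'] (f : G →* G')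
    (hf : Function.Surjective f) (p : ℕ) (h : IsPSolvable p G) : IsPSolvable p G' := by
  obtain ⟨n, c, h0, hlast, hstep⟩ := h
  refine ⟨n, fun i => (c i).map f, by simp only []; rw [h0]; exact Subgroup.map_bot f,
    by simp only []; rw [hlast]; exact Subgroup.map_top_of_surjective f hf, ?_⟩
  intro i
  obtain ⟨hle, hnorm, hpp⟩ := hstep i
  refine ⟨Subgroup.map_mono hle, ?_, ?_⟩
  · rw [normal_subgroupOf_iff' (Subgroup.map_mono hle)]
    rintro a' ha' b' hb'
    obtain ⟨a, ha, rfl⟩ := ha'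
    obtain ⟨b, hb, rfl⟩ := hb'
    have := (normal_subgroupOf_iff' hle).mp hnorm a ha b hb
    exact ⟨b * a * b⁻¹, this, by simp [map_mul, map_inv]⟩
  · rcases hpp with hppow | hpidx
    · left
      rintro x' hx'
      obtain ⟨x, hx, rfl⟩ := hx'
      obtain ⟨m, hm⟩ := hppow x hx
      exact ⟨m, by rw [← map_pow]; exact ⟨_, hm, rfl⟩⟩
    · right
      intro hdvd
      exact hpidx (hdvd.trans (relindex_map_dvd_relindex f _ _ hle))

lemma exists_normal_pgroup_or_pprime_aux (p : ℕ) (hp : p.Prime) :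
    ∀ (n : ℕ) (G : Type*) (_ : Group G) (_ : Finite G) (c : Fin (n + 1) → Subgroup G),
      c 0 = ⊥ → c (Fin.last n) = ⊤ →
      (∀ i : Fin n, c i.castSucc ≤ c i.succ ∧
        ((c i.castSucc).subgroupOf (c i.succ)).Normal ∧
        ((∀ x ∈ c i.succ, ∃ m : ℕ, x ^ (p ^ m) ∈ c i.castSucc) ∨
          ¬ p ∣ (c i.castSucc).relIndex (c i.succ))) →
      Nat.card G ≠ 1 →
      ∃ N : Subgroup G, N.Normal ∧ N ≠ ⊥ ∧ (IsPGroup p ↥N ∨ ¬ p ∣ Nat.card ↥N) := by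
  intro n
  induction n with
  | zero =>
    intro G _ _ c h0 hlast _ hcard
    exfalso
    apply hcard
    have hbt : (⊥ : Subgroup G) = ⊤ := by
      rw [← h0, show (0 : Fin 1) = Fin.last 0 from rfl, hlast]
    have hone : ∀ g : G, g = 1 := by
      intro g
      have : g ∈ (⊥ : Subgroup G) := hbt ▸ Subgroup.mem_top g
      simpa [Subgroup.mem_bot] using this
    haveI : Subsingleton G := ⟨fun a b => by rw [hone a, hone b]⟩
    exact Nat.card_eq_one_iff_unique.mpr ⟨inferInstance, ⟨1⟩⟩
  | succ n ih =>
    intro G _ _ c h0 hlast hstep hcard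
    have hlaststep := hstep (Fin.last n)
    have hMnormal : (c (Fin.last n).castSucc).Normal := by
      have hn := hlaststep.2.1
      rw [Fin.succ_last, hlast] at hn
      rw [normal_subgroupOf_iff' le_top] at hn
      exact ⟨fun x hx g => hn x hx g (Subgroup.mem_top g)⟩
    by_cases hMbot : c (Fin.last n).castSucc = ⊥
    · have hne : (⊤ : Subgroup G) ≠ ⊥ := by
        intro h
        apply hcard
        have hone : ∀ g : G, g = 1 := by
          intro g
          have : g ∈ (⊥ : Subgroup G) := h ▸ Subgroup.mem_top g
          simpa [Subgroup.mem_bot] using this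
        haveI : Subsingleton G := ⟨fun a b => by rw [hone a, hone b]⟩
        exact Nat.card_eq_one_iff_unique.mpr ⟨inferInstance, ⟨1⟩⟩
      refine ⟨⊤, inferInstance, hne, ?_⟩
      have hd := hlaststep.2.2
      rw [Fin.succ_last, hlast, hMbot] at hd
      rcases hd with hl | hr
      · left
        intro x
        obtain ⟨m, hm⟩ := hl (x : G) (Subgroup.mem_top _)
        refine ⟨m, ?_⟩
        have hx1 : ((x : G)) ^ (p ^ m) = 1 := by simpa [Subgroup.mem_bot] using hm
        exact Subtype.ext (by simpa using hx1)
      · right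
        rwa [Subgroup.relIndex_bot_left] at hr
    · have hmono : Monotone c := chain_mono c (fun i => (hstep i).1)
      set M := c (Fin.last n).castSucc with hMdef
      set c' : Fin (n+1) → Subgroup ↥M := fun i => (c i.castSucc).subgroupOf M with hc'
      have h0' : c' 0 = ⊥ := by
        show (c (0 : Fin (n+1)).castSucc).subgroupOf M = ⊥
        rw [show ((0 : Fin (n+1)).castSucc) = (0 : Fin (n+2)) from rfl, h0,
          Subgroup.bot_subgroupOf]
      have hlast' : c' (Fin.last n) = ⊤ := by
        show (c (Fin.last n).castSucc).subgroupOf M = ⊤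
        exact Subgroup.subgroupOf_self _
      have hstep' : ∀ i : Fin n, c' i.castSucc ≤ c' i.succ ∧
          ((c' i.castSucc).subgroupOf (c' i.succ)).Normal ∧
          ((∀ x ∈ c' i.succ, ∃ m : ℕ, x ^ (p ^ m) ∈ c' i.castSucc) ∨
            ¬ p ∣ (c' i.castSucc).relIndex (c' i.succ)) := by
        intro i
        have horig := hstep i.castSucc
        have e2 : (i.succ.castSucc : Fin (n+2)) = i.castSucc.succ := (Fin.succ_castSucc i).symm
        have hAB : c i.castSucc.castSucc ≤ c i.castSucc.succ := horig.1
        have hBM : c i.castSucc.succ ≤ M := by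
          rw [← e2]
          exact hmono (by
            rw [Fin.castSucc_le_castSucc_iff]
            exact Fin.le_last _)
        have hcA : c' i.castSucc = (c i.castSucc.castSucc).subgroupOf M := rfl
        have hcB : c' i.succ = (c i.castSucc.succ).subgroupOf M := by
          show (c i.succ.castSucc).subgroupOf M = _
          rw [e2]
        refine ⟨?_, ?_, ?_⟩
        · rw [hcA, hcB]
          exact Subgroup.comap_mono hAB
        · rw [hcA, hcB]
          have hle' : (c i.castSucc.castSucc).subgroupOf M ≤ (c i.castSucc.succ).subgroupOf M :=
            Subgroup.comap_mono hAB
          rw [normal_subgroupOf_iff' hle']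
          intro a ha b hb
          rw [Subgroup.mem_subgroupOf] at ha hb ⊢
          have := (normal_subgroupOf_iff' hAB).mp horig.2.1 (a : G) ha (b : G) hb
          simpa using this
        · rcases horig.2.2 with hl | hr
          · left
            intro x hx
            rw [hcB, Subgroup.mem_subgroupOf] at hx
            obtain ⟨m, hm⟩ := hl (x : G) hx
            refine ⟨m, ?_⟩
            rw [hcA, Subgroup.mem_subgroupOf]
            simpa using hm
          · right
            rw [hcA, hcB, Subgroup.relIndex_subgroupOf hBM]
            exact hr
      have hcardM : Nat.card ↥M ≠ 1 :=
        fun h1 => hMbot (Subgroup.card_eq_one.mp h1)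
      obtain ⟨N', hN'norm, hN'bot, hN'pp⟩ := ih ↥M inferInstance inferInstance c' h0' hlast' hstep' hcardM
      rcases hN'pp with hpg | hpp
      · obtain ⟨C, hQC, hCbot, hCnorm⟩ := upgrade_core hMnormal (fun X => IsPGroup p ↥X)
          (fun X Y _ hYn hX hY => by
            haveI := hYn
            exact IsPGroup.to_sup_of_normal_right hX hY)
          (fun σ X hX => hX.map σ.toMonoidHom)
          N' hN'norm hN'bot hpg
        refine ⟨C.map M.subtype, hCnorm, ?_, Or.inl (hQC.map M.subtype)⟩
        rw [Ne, Subgroup.map_eq_bot_iff_of_injective _ (Subgroup.subtype_injective M)]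
        exact hCbot
      · obtain ⟨C, hQC, hCbot, hCnorm⟩ := upgrade_core hMnormal (fun X => ¬ p ∣ Nat.card ↥X)
          (fun X Y _ hYn hX hY hdvd => by
            have hd2 := hdvd.trans (card_sup_dvd_mul X Y hYn)
            rcases (Nat.Prime.dvd_mul hp).mp hd2 with h | h
            exacts [hX h, hY h])
          (fun σ X hX hdvd => hX (by
            have : Nat.card ↥(X.map σ.toMonoidHom) = Nat.card ↥X :=
              (Nat.card_congr (Subgroup.equivMapOfInjective X σ.toMonoidHom σ.injective).toEquiv).symm
            rwa [this] at hdvd))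
          N' hN'norm hN'bot hpp
        refine ⟨C.map M.subtype, hCnorm, ?_, Or.inr ?_⟩
        · rw [Ne, Subgroup.map_eq_bot_iff_of_injective _ (Subgroup.subtype_injective M)]
          exact hCbot
        · intro hdvd
          apply hQC
          have : Nat.card ↥(C.map M.subtype) = Nat.card ↥C :=
            (Nat.card_congr (Subgroup.equivMapOfInjective C M.subtype
              (Subgroup.subtype_injective M)).toEquiv).symm
          rwa [this] at hdvd

lemma exists_normal_pgroup_or_pprime {G : Type*} [Group G] [Finite G] (p : ℕ) (hp : p.Prime)
    (hps : IsPSolvable p G) (hG : Nat.card G ≠ 1) :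
    ∃ N : Subgroup G, N.Normal ∧ N ≠ ⊥ ∧ (IsPGroup p ↥N ∨ ¬ p ∣ Nat.card ↥N) := by
  obtain ⟨n, c, h0, hlast, hstep⟩ := hps
  exact exists_normal_pgroup_or_pprime_aux p hp n G inferInstance inferInstance c h0 hlast hstep hG

lemma descend (p : ℕ) (hp : p.Prime)
    {k : Type u} {V : Type v} {H : Type w} [Field k] [AddCommGroup V] [Module k V]
    [Group H] [Finite H] [DistribMulAction H V] [SMulCommClass H k V]
    (hps : IsPSolvable p H)
    (N : Subgroup H) (hNnorm : N.Normal) (hNbot : N ≠ ⊥)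
    (W : Submodule k V)
    (hWstab : ∀ (h : H), ∀ w ∈ W, h • w ∈ W)
    (hWfix : ∀ g ∈ N, ∀ w ∈ W, g • w = w)
    (a' : V) (ha'W : a' ∈ W)
    (P : Sylow p H) (hPa' : ∀ h ∈ (P : Subgroup H), h • a' = a')
    (hspanW : ∀ w ∈ W, w ∈ Submodule.span k (MulAction.orbit H a'))
    (b : V) (hbW : b ∈ W)
    (hcop' : Nat.Coprime (Nat.card (MulAction.orbit H a')) (Nat.card (MulAction.orbit H b)))
    (IH : ∀ (H' : Type w), ∀ (_ : Group H') (_ : Finite H'), Nat.card H' < Nat.card H →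
      ∀ (V' : Type v), ∀ (_ : AddCommGroup V') (_ : Module k V') (_ : DistribMulAction H' V')
        (_ : SMulCommClass H' k V'),
        IsPSolvable p H' → ∀ (a'' : V') (P' : Sylow p H'),
        (∀ h ∈ (P' : Subgroup H'), h • a'' = a'') →
        Submodule.span k (MulAction.orbit H' a'') = ⊤ →
        ∀ b'' : V', Nat.Coprime (Nat.card (MulAction.orbit H' a''))
          (Nat.card (MulAction.orbit H' b'')) →
        ∀ h : H', h • b'' = b'') :
    ∀ h : H, h • b = b := by
  haveI := hNnorm
  haveI : Fact p.Prime := ⟨hp⟩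
  -- action of H on ↥W
  letI instSMulHW : SMul H ↥W := ⟨fun h w => ⟨h • (w : V), hWstab h w w.2⟩⟩
  have hsmul_def : ∀ (h : H) (w : ↥W), ((h • w : ↥W) : V) = h • (w : V) := fun _ _ => rfl
  letI instMAHW : MulAction H ↥W :=
    { one_smul := fun w => Subtype.ext (by rw [hsmul_def, one_smul])
      mul_smul := fun g h w => Subtype.ext (by
        rw [hsmul_def, hsmul_def, hsmul_def, mul_smul]) }
  -- quotient action
  letI instSMulQW : SMul (H ⧸ N) ↥W := ⟨fun q w => Quotient.liftOn' q (fun h => h • w) (by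
      intro h h' hrel
      rw [QuotientGroup.leftRel_apply] at hrel
      apply Subtype.ext
      rw [hsmul_def, hsmul_def]
      calc h • (w : V) = h • ((h⁻¹ * h') • (w : V)) := by rw [hWfix _ hrel _ w.2]
        _ = h' • (w : V) := by rw [← mul_smul]; congr 1; group)⟩
  have hqmk : ∀ (h : H) (w : ↥W), (QuotientGroup.mk h : H ⧸ N) • w = h • w := fun _ _ => rfl
  letI instMAQW : MulAction (H ⧸ N) ↥W :=
    { one_smul := fun w => by
        rw [show (1 : H ⧸ N) = QuotientGroup.mk 1 from rfl, hqmk, one_smul]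
      mul_smul := fun q1 q2 w => by
        induction q1 using QuotientGroup.induction_on
        induction q2 using QuotientGroup.induction_on
        rename_i h1 h2
        rw [show QuotientGroup.mk h1 * QuotientGroup.mk h2 = (QuotientGroup.mk (h1 * h2) : H ⧸ N)
          from rfl, hqmk, hqmk, hqmk, mul_smul] }
  letI instDMAQW : DistribMulAction (H ⧸ N) ↥W :=
    { smul_add := fun q w1 w2 => by
        induction q using QuotientGroup.induction_on
        rename_i h
        rw [hqmk, hqmk, hqmk]
        apply Subtype.ext
        rw [hsmul_def]
        show h • ((w1 : V) + (w2 : V)) = _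
        rw [smul_add]
        rfl
      smul_zero := fun q => by
        induction q using QuotientGroup.induction_on
        rename_i h
        rw [hqmk]
        apply Subtype.ext
        rw [hsmul_def]
        show h • (0 : V) = (0 : V)
        rw [smul_zero] }
  letI instSCCQW : SMulCommClass (H ⧸ N) k ↥W := ⟨fun q c w => by
      induction q using QuotientGroup.induction_on
      rename_i h
      rw [hqmk, hqmk]
      apply Subtype.ext
      rw [hsmul_def]
      show h • (c • (w : V)) = c • (h • (w : V))
      exact smul_comm h c (w : V)⟩
  -- Sylow in quotient
  have hπ : Function.Surjective (QuotientGroup.mk' N) := QuotientGroup.mk'_surjective N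
  let P' : Sylow p (H ⧸ N) := P.mapSurjective hπ
  let aW : ↥W := ⟨a', ha'W⟩
  let bW : ↥W := ⟨b, hbW⟩
  have horbW : ∀ w : ↥W, MulAction.orbit (H ⧸ N) w = MulAction.orbit H w := by
    intro w
    ext u
    rw [MulAction.mem_orbit_iff, MulAction.mem_orbit_iff]
    constructor
    · rintro ⟨q, rfl⟩
      induction q using QuotientGroup.induction_on
      rename_i h
      exact ⟨h, (hqmk h w).symm⟩
    · rintro ⟨h, rfl⟩
      exact ⟨QuotientGroup.mk h, hqmk h w⟩
  have hstabW : ∀ w : ↥W, MulAction.stabilizer H w = MulAction.stabilizer H (w : V) := by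
    intro w
    ext h
    rw [MulAction.mem_stabilizer_iff, MulAction.mem_stabilizer_iff, ← hsmul_def, Subtype.ext_iff]
  have hcardorb : ∀ w : ↥W, Nat.card (MulAction.orbit H w) = Nat.card (MulAction.orbit H (w : V)) := by
    intro w
    rw [card_orbit_eq_index, card_orbit_eq_index, hstabW]
  have hPa'' : ∀ q ∈ (P' : Subgroup (H ⧸ N)), q • aW = aW := by
    intro q hq
    have hq' : q ∈ Subgroup.map (QuotientGroup.mk' N) (P : Subgroup H) := hq
    obtain ⟨g, hg, rfl⟩ := hq'
    rw [show ((QuotientGroup.mk' N) g : H ⧸ N) = QuotientGroup.mk g from rfl, hqmk]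
    exact Subtype.ext (by rw [hsmul_def]; exact hPa' g hg)
  have himg : (Subtype.val '' (MulAction.orbit H aW) : Set V) = MulAction.orbit H a' := by
    ext u
    constructor
    · rintro ⟨w, hw, rfl⟩
      obtain ⟨h, rfl⟩ := hw
      exact ⟨h, (hsmul_def h aW).symm⟩
    · rintro ⟨h, rfl⟩
      exact ⟨h • aW, ⟨h, rfl⟩, hsmul_def h aW⟩
  have hspan'' : Submodule.span k (MulAction.orbit (H ⧸ N) aW) = ⊤ := by
    rw [horbW, Submodule.eq_top_iff']
    intro w
    have hw := hspanW (w : V) w.2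
    have hmap : Submodule.map W.subtype (Submodule.span k (MulAction.orbit H aW))
        = Submodule.span k (MulAction.orbit H a') := by
      have himg' : (⇑W.subtype '' (MulAction.orbit H aW) : Set V) = MulAction.orbit H a' := himg
      rw [Submodule.map_span, himg']
    have hw2 : (w : V) ∈ Submodule.map W.subtype (Submodule.span k (MulAction.orbit H aW)) :=
      hmap ▸ hw
    obtain ⟨u, hu, huv⟩ := hw2
    exact (Subtype.ext huv : u = w) ▸ hu
  have hcop'' : Nat.Coprime (Nat.card (MulAction.orbit (H ⧸ N) aW))
      (Nat.card (MulAction.orbit (H ⧸ N) bW)) := by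
    rw [horbW, horbW, hcardorb, hcardorb]
    exact hcop'
  have hps'' : IsPSolvable p (H ⧸ N) := isPSolvable_of_surjective _ hπ p hps
  have hlt : Nat.card (H ⧸ N) < Nat.card H := by
    have hcards : Nat.card H = Nat.card (H ⧸ N) * Nat.card N :=
      Subgroup.card_eq_card_quotient_mul_card_subgroup N
    have h1 : Nat.card N ≠ 1 := fun h => hNbot (Subgroup.card_eq_one.mp h)
    have h0 : 0 < Nat.card N := Nat.card_pos
    have hQpos : 0 < Nat.card (H ⧸ N) := Nat.card_pos
    calc Nat.card (H ⧸ N) = Nat.card (H ⧸ N) * 1 := (mul_one _).symm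
      _ < Nat.card (H ⧸ N) * Nat.card N := (Nat.mul_lt_mul_left hQpos).mpr (by omega)
      _ = Nat.card H := hcards.symm
  have hfix := IH (H ⧸ N) inferInstance inferInstance hlt ↥W inferInstance inferInstance
    inferInstance inferInstance hps'' aW P' hPa'' hspan'' bW hcop''
  intro h
  have hb := hfix (QuotientGroup.mk h)
  rw [hqmk] at hb
  have := congrArg Subtype.val hb
  rwa [hsmul_def] at this

theorem stmt4_aux (p : ℕ) (hp : p.Prime) :
    ∀ (n : ℕ), ∀ (k : Type u) (V : Type v) (H : Type w),
      ∀ (_ : Field k) (_ : AddCommGroup V) (_ : Module k V)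
      (_ : Group H) (_ : Finite H) (_ : DistribMulAction H V) (_ : SMulCommClass H k V),
      CharP k p → IsPSolvable p H →
      ∀ (a : V) (P : Sylow p H), (∀ h ∈ (P : Subgroup H), h • a = a) →
      Submodule.span k (MulAction.orbit H a) = ⊤ →
      ∀ b : V, Nat.Coprime (Nat.card (MulAction.orbit H a)) (Nat.card (MulAction.orbit H b)) →
      Nat.card H ≤ n → ∀ h : H, h • b = b := by
  intro n
  induction n using Nat.strong_induction_on with
  | _ n IHn =>
  intro k V H iF iA iM iG iFin iD iS hchar hps a P hPa hspan b hcop hcardn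
  by_cases hH1 : Nat.card H = 1
  · haveI : Subsingleton H := (Nat.card_eq_one_iff_unique.mp hH1).1
    intro h
    rw [Subsingleton.elim h 1, one_smul]
  obtain ⟨N, hNnorm, hNbot, hNpp⟩ := exists_normal_pgroup_or_pprime p hp hps hH1
  haveI := hNnorm
  -- the fixed-point submodule of N
  let W : Submodule k V :=
    { carrier := {v | ∀ g ∈ N, g • v = v}
      add_mem' := fun {v w} hv hw g hg => by
        rw [smul_add, hv g hg, hw g hg]
      zero_mem' := fun g hg => smul_zero g
      smul_mem' := fun c v hv g hg => by
        rw [smul_comm, hv g hg] }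
  have hWmem : ∀ v : V, v ∈ W ↔ ∀ g ∈ N, g • v = v := fun _ => Iff.rfl
  have hWstab : ∀ (h : H), ∀ w ∈ W, h • w ∈ W := by
    intro h w hw g hg
    have hg' : h⁻¹ * g * h ∈ N := by simpa using hNnorm.conj_mem g hg h⁻¹
    calc g • h • w = h • ((h⁻¹ * g * h) • w) := by
          rw [← mul_smul, ← mul_smul]; congr 1; group
      _ = h • w := by rw [hw _ hg']
  have hWfix : ∀ g ∈ N, ∀ w ∈ W, g • w = w := fun g hg w hw => hw g hg
  -- the IH-adapter for descend
  have IHad : ∀ (H' : Type w), ∀ (_ : Group H') (_ : Finite H'), Nat.card H' < Nat.card H →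
      ∀ (V' : Type v), ∀ (_ : AddCommGroup V') (_ : Module k V') (_ : DistribMulAction H' V')
        (_ : SMulCommClass H' k V'),
        IsPSolvable p H' → ∀ (a'' : V') (P' : Sylow p H'),
        (∀ h ∈ (P' : Subgroup H'), h • a'' = a'') →
        Submodule.span k (MulAction.orbit H' a'') = ⊤ →
        ∀ b'' : V', Nat.Coprime (Nat.card (MulAction.orbit H' a''))
          (Nat.card (MulAction.orbit H' b'')) →
        ∀ h : H', h • b'' = b'' := by
    intro H' iG' iFin' hlt V' iA' iM' iD' iS' hps' a'' P' hPa'' hspan'' b'' hcop''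
    exact IHn (Nat.card H') (lt_of_lt_of_le hlt hcardn) k V' H' iF iA' iM' iG' iFin' iD' iS'
      hchar hps' a'' P' hPa'' hspan'' b'' hcop'' le_rfl
  rcases hNpp with hpg | hpp
  · -- Case A : N is a p-group, acts trivially on V
    have hNleP : N ≤ (P : Subgroup H) := by
      have hsup : IsPGroup p ((N ⊔ (P : Subgroup H)) : Subgroup H) :=
        IsPGroup.to_sup_of_normal_left hpg P.2
      have heq := P.3 hsup le_sup_right
      exact le_sup_left.trans heq.le
    have horbfix : ∀ g ∈ N, ∀ h : H, g • (h • a) = h • a := by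
      intro g hg h
      have hg' : h⁻¹ * g * h ∈ N := by simpa using hNnorm.conj_mem g hg h⁻¹
      calc g • h • a = h • ((h⁻¹ * g * h) • a) := by
            rw [← mul_smul, ← mul_smul]; congr 1; group
        _ = h • a := by rw [hPa _ (hNleP hg')]
    have hallW : ∀ v : V, v ∈ W := by
      have hsle : Submodule.span k (MulAction.orbit H a) ≤ W := by
        rw [Submodule.span_le]
        rintro v ⟨h, rfl⟩
        intro g hg
        exact horbfix g hg h
      intro v
      exact hsle (by rw [hspan]; trivial)
    exact descend p hp hps N hNnorm hNbot W hWstab hWfix a (hallW a) P hPa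
      (fun w _ => by rw [hspan]; trivial) b (hallW b) hcop IHad
  · -- Case B : N is a p'-group
    classical
    letI : Fintype ↥N := Fintype.ofFinite ↥N
    let SN : V →ₗ[k] V := ∑ g : ↥N, DistribMulAction.toLinearMap k V ((g : H))
    have hSNapply : ∀ v, SN v = ∑ g : ↥N, (g : H) • v := by
      intro v
      simp [SN, LinearMap.sum_apply, DistribMulAction.toLinearMap]
    have hSNequiv : ∀ (h : H) (v : V), h • SN v = SN (h • v) := by
      intro h v
      rw [hSNapply, hSNapply, Finset.smul_sum]
      let e : ↥N ≃ ↥N := (MulAut.conjNormal h : MulAut ↥N).toEquiv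
      refine Fintype.sum_equiv e (fun g => h • ((g : H) • v)) (fun g => (g : H) • (h • v)) ?_
      intro g
      show h • ((g : H) • v) = ((e g : ↥N) : H) • (h • v)
      have hco : ((e g : ↥N) : H) = h * (g : H) * h⁻¹ := MulAut.conjNormal_apply h g
      rw [smul_smul, smul_smul, hco]
      congr 1
      group
    have hSNW : ∀ v, SN v ∈ W := by
      intro v g hg
      rw [hSNapply, Finset.smul_sum]
      let e : ↥N ≃ ↥N := Equiv.mulLeft (⟨g, hg⟩ : ↥N)
      refine Fintype.sum_equiv e (fun n => g • ((n : H) • v)) (fun n => (n : H) • v) ?_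
      intro n
      show g • ((n : H) • v) = ((e n : ↥N) : H) • v
      have hco : ((e n : ↥N) : H) = g * (n : H) := rfl
      rw [smul_smul, hco]
    have hcardN0 : ((Nat.card ↥N : ℕ) : k) ≠ 0 := by
      rw [Ne, CharP.cast_eq_zero_iff k p]
      exact hpp
    set a0 : V := (Nat.card ↥N : k)⁻¹ • SN a with ha0def
    have ha0W : a0 ∈ W := W.smul_mem _ (hSNW a)
    have hPa0 : ∀ h ∈ (P : Subgroup H), h • a0 = a0 := by
      intro h hh
      rw [ha0def, smul_comm, hSNequiv, hPa h hh]
    have hstab_a : MulAction.stabilizer H a ≤ MulAction.stabilizer H a0 := by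
      intro h hh
      rw [MulAction.mem_stabilizer_iff] at hh ⊢
      rw [ha0def, smul_comm, hSNequiv, hh]
    have hEfix : ∀ w ∈ W, (Nat.card ↥N : k)⁻¹ • SN w = w := by
      intro w hw
      have hSNw : SN w = (Nat.card ↥N : k) • w := by
        have h1 : (∑ g : ↥N, (g : H) • w) = ∑ _g : ↥N, w :=
          Finset.sum_congr rfl (fun g _ => hw (g : H) g.2)
        rw [hSNapply, h1, Finset.sum_const, Finset.card_univ, ← Nat.card_eq_fintype_card,
          ← Nat.cast_smul_eq_nsmul k]
      rw [hSNw, smul_smul, inv_mul_cancel₀ hcardN0, one_smul]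
    have hspanW : ∀ w ∈ W, w ∈ Submodule.span k (MulAction.orbit H a0) := by
      intro w hw
      let E : V →ₗ[k] V := (Nat.card ↥N : k)⁻¹ • SN
      have hEw : E w = w := hEfix w hw
      have hworb : w ∈ Submodule.map E (Submodule.span k (MulAction.orbit H a)) :=
        ⟨w, by rw [hspan]; trivial, hEw⟩
      rw [Submodule.map_span] at hworb
      refine Submodule.span_mono ?_ hworb
      rintro v ⟨u, ⟨h, rfl⟩, rfl⟩
      refine ⟨h, ?_⟩
      show h • a0 = E (h • a)
      show h • a0 = (Nat.card ↥N : k)⁻¹ • SN (h • a)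
      rw [← hSNequiv, ha0def, smul_comm]
    -- b ∈ W
    have hbW : b ∈ W := by
      set B := MulAction.stabilizer H b with hB
      set X := B.subgroupOf N with hX
      letI : Fintype ↥X := Fintype.ofFinite ↥X
      let Φ : V →ₗ[k] V := ∑ g : ↥X, DistribMulAction.toLinearMap k V (((g : ↥N) : H))
      have hΦapply : ∀ v, Φ v = ∑ g : ↥X, ((g : ↥N) : H) • v := by
        intro v
        simp [Φ, LinearMap.sum_apply, DistribMulAction.toLinearMap]
      have hkey : ∀ v ∈ MulAction.orbit H a, Φ v ∈ W := by
        rintro v ⟨h, rfl⟩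
        have hidxa : (MulAction.stabilizer H (h • a)).relIndex N ∣
            Nat.card (MulAction.orbit H a) := by
          have h1 := relindex_dvd_index_of_normal_right (MulAction.stabilizer H (h • a)) N hNnorm
          rw [← card_orbit_eq_index, MulAction.orbit_smul] at h1
          exact h1
        have hidxb : B.relIndex N ∣ Nat.card (MulAction.orbit H b) := by
          have h1 := relindex_dvd_index_of_normal_right B N hNnorm
          rwa [← card_orbit_eq_index] at h1
        have hcopN : Nat.Coprime X.index
            (((MulAction.stabilizer H (h • a)).subgroupOf N).index) := by
          show Nat.Coprime (B.relIndex N) ((MulAction.stabilizer H (h • a)).relIndex N)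
          exact Nat.Coprime.coprime_dvd_left hidxb
            (Nat.Coprime.coprime_dvd_right hidxa hcop.symm)
        have hcover := cover_of_coprime_index X
          ((MulAction.stabilizer H (h • a)).subgroupOf N) hcopN
        -- image equality
        have himg : Finset.image (fun g : ↥X => g • (h • a)) Finset.univ
            = Finset.image (fun nn : ↥N => nn • (h • a)) Finset.univ := by
          apply Finset.Subset.antisymm
          · intro y hy
            obtain ⟨g, -, rfl⟩ := Finset.mem_image.mp hy
            exact Finset.mem_image.mpr ⟨(g : ↥N), Finset.mem_univ _, rfl⟩
          · intro y hy
            obtain ⟨nn, -, rfl⟩ := Finset.mem_image.mp hy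
            obtain ⟨x', hx', y', hy', hxy⟩ := hcover nn
            refine Finset.mem_image.mpr ⟨⟨x', hx'⟩, Finset.mem_univ _, ?_⟩
            rw [Subgroup.mem_subgroupOf] at hy'
            have hy'fix : ((y' : H)) • (h • a) = h • a := hy'
            show ((x' : H)) • (h • a) = ((nn : H)) • (h • a)
            rw [← hxy]
            show ((x' : H)) • (h • a) = ((x' * y' : ↥N) : H) • (h • a)
            push_cast
            rw [mul_smul, hy'fix]
          -- sums
        obtain ⟨m1, hm1pos, hsum1⟩ := sum_smul_eq_nsmul_sum (Γ := ↥X) (h • a)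
        have hΦv : Φ (h • a) = m1 • ∑ y ∈ Finset.image (fun nn : ↥N => nn • (h • a))
            Finset.univ, y := by
          have hconv : Φ (h • a) = ∑ g : ↥X, g • (h • a) := by
            rw [hΦapply]
            exact Finset.sum_congr rfl (fun g _ => rfl)
          rw [hconv, hsum1, himg]
        have hNfixsum : (∑ y ∈ Finset.image (fun nn : ↥N => nn • (h • a)) Finset.univ, y) ∈ W := by
          intro g hg
          rw [Finset.smul_sum]
          refine Finset.sum_nbij' (i := fun y => g • y) (j := fun y => g⁻¹ • y)
            ?hi ?hj ?left ?right ?heq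
          case hi =>
            intro y hy
            obtain ⟨nn, -, rfl⟩ := Finset.mem_image.mp hy
            refine Finset.mem_image.mpr ⟨⟨g, hg⟩ * nn, Finset.mem_univ _, ?_⟩
            show ((⟨g, hg⟩ * nn : ↥N) : H) • (h • a) = _
            push_cast
            rw [mul_smul]
            rfl
          case hj =>
            intro y hy
            obtain ⟨nn, -, rfl⟩ := Finset.mem_image.mp hy
            have hginv : g⁻¹ ∈ N := inv_mem hg
            refine Finset.mem_image.mpr ⟨⟨g⁻¹, hginv⟩ * nn, Finset.mem_univ _, ?_⟩
            show ((⟨g⁻¹, hginv⟩ * nn : ↥N) : H) • (h • a) = _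
            push_cast
            rw [mul_smul]
            rfl
          case left =>
            intro y _
            simp
          case right =>
            intro y _
            simp
          case heq =>
            intro y _
            rfl
        rw [hΦv, ← Nat.cast_smul_eq_nsmul k]
        exact W.smul_mem _ hNfixsum
      have hΦspan : Φ b ∈ W := by
        have hsle : Submodule.span k (MulAction.orbit H a) ≤ W.comap Φ :=
          Submodule.span_le.mpr (fun v hv => hkey v hv)
        exact hsle (by rw [hspan]; trivial)
      have hΦb : Φ b = (Nat.card ↥X : k) • b := by
        have hfix : ∀ g : ↥X, ((g : ↥N) : H) • b = b := fun g => g.2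
        rw [hΦapply, Finset.sum_congr rfl (fun g _ => hfix g), Finset.sum_const,
          Finset.card_univ, ← Nat.card_eq_fintype_card, ← Nat.cast_smul_eq_nsmul k]
      have hcardX0 : ((Nat.card ↥X : ℕ) : k) ≠ 0 := by
        rw [Ne, CharP.cast_eq_zero_iff k p]
        intro hdvd
        exact hpp (hdvd.trans (Subgroup.card_subgroup_dvd_card X))
      have hbeq : b = (Nat.card ↥X : k)⁻¹ • Φ b := by
        rw [hΦb, smul_smul, inv_mul_cancel₀ hcardX0, one_smul]
      rw [hbeq]
      exact W.smul_mem _ hΦspan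
    -- coprimality for a0
    have hdvd_a0 : Nat.card (MulAction.orbit H a0) ∣ Nat.card (MulAction.orbit H a) := by
      rw [card_orbit_eq_index, card_orbit_eq_index]
      exact Subgroup.index_dvd_of_le hstab_a
    have hcop' : Nat.Coprime (Nat.card (MulAction.orbit H a0))
        (Nat.card (MulAction.orbit H b)) := Nat.Coprime.coprime_dvd_left hdvd_a0 hcop
    exact descend p hp hps N hNnorm hNbot W hWstab hWfix a0 ha0W P hPa0 hspanW b hbW hcop' IHad

/-- Over a field of characteristic `p > 0`, let `H` be a `p`-soluble
finite group, and `a ∈ V` fixed by some Sylow `p`-subgroup of `H` with `H`-orbit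
spanning `V`.  If `b ∈ V` has orbit size coprime to that of `a`, then `b` is fixed
by all of `H`. -/
theorem stmt4 {k V H : Type*} [Field k] [AddCommGroup V] [Module k V]
    [Group H] [Finite H] [DistribMulAction H V] [SMulCommClass H k V]
    (p : ℕ) (hp : p.Prime) (hchar : CharP k p)
    (hps : IsPSolvable p H)
    (a : V) (P : Sylow p H) (hPa : ∀ h ∈ (P : Subgroup H), h • a = a)
    (hspan : Submodule.span k (MulAction.orbit H a) = ⊤)
    (b : V)
    (hcop : Nat.Coprime (Nat.card (MulAction.orbit H a)) (Nat.card (MulAction.orbit H b))) :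
    ∀ h : H, h • b = b :=
  stmt4_aux p hp (Nat.card H) k V H inferInstance inferInstance inferInstance inferInstance
    inferInstance inferInstance inferInstance hchar hps a P hPa hspan b hcop le_rfl
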